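/- Correctness of the ARC (Avoid Redundant Calculations) strategy: let ot(r) be partitioned into A (periods where pu(r, t) has been computed) and B (periods where r was pruned, so pu(r, t) < ptsu(t)·ξ). If (Σ_{t∈A} pu(r, t) + Σ_{t∈B} ptsu(t)·ξ) / Σ_{t∈ot(r)} ptsu(t) < ξ, then our(r) < ξ, i.e., r is not an on-shelf high-utility sequential pattern. -/
import Mathlib


/-- Correctness of the ARC strategy: with `ot(r)` partitioned into calculated
periods `A` and pruned periods `B` (where `pu(r,t) ≤ ptsu(t)·ξ`), if
`(Σ_{t∈A} pu(r,t) + ξ·Σ_{t∈B} ptsu(t)) / Σ_{t∈ot(r)} ptsu(t) < ξ` then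
`our(r) < ξ`, so `r` is not an osHUSP. -/
theorem arc_correct {τ : Type*} [DecidableEq τ]
    (A B : Finset τ) (hdisj : Disjoint A B)
    (ot : Finset τ) (hpart : A ∪ B = ot)
    (pu : τ → ℝ) (ptsu : τ → ℝ)
    (hptsu : ∀ t ∈ ot, 0 < ptsu t)
    (ξ : ℝ) (hξ : 0 < ξ)
    (hB : ∀ t ∈ B, pu t ≤ ptsu t * ξ)
    (h : (∑ t ∈ A, pu t + ξ * ∑ t ∈ B, ptsu t) / ∑ t ∈ ot, ptsu t < ξ) :
    (∑ t ∈ A, pu t + ∑ t ∈ B, pu t) / ∑ t ∈ ot, ptsu t < ξ := by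
  rcases ot.eq_empty_or_nonempty with he | hne
  · simp [he, hξ]
  · have hden : 0 < ∑ t ∈ ot, ptsu t :=
      Finset.sum_pos (fun t ht => hptsu t ht) hne
    have hnum : ∑ t ∈ A, pu t + ∑ t ∈ B, pu t ≤
        ∑ t ∈ A, pu t + ξ * ∑ t ∈ B, ptsu t := by
      have : ∑ t ∈ B, pu t ≤ ∑ t ∈ B, ptsu t * ξ := Finset.sum_le_sum hB
      rw [← Finset.sum_mul] at this
      linarith [this]
    calc (∑ t ∈ A, pu t + ∑ t ∈ B, pu t) / ∑ t ∈ ot, ptsu t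
        ≤ (∑ t ∈ A, pu t + ξ * ∑ t ∈ B, ptsu t) / ∑ t ∈ ot, ptsu t :=
          div_le_div_of_nonneg_right hnum hden.le |>.trans_eq rfl
      _ < ξ := h
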